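/- Let α > 0 and let g : (0,1] → ℝ be nonnegative, measurable, and integrable on (0,1]. Then ∫₀¹ α·x^(α−1)·(∫_x^1 y^(−α)·g(y) dy) dx = ∫₀¹ g(y) dy. -/

import Mathlib

open MeasureTheory Real Set
open scoped ENNReal

/-- unbiasedness: For `α > 0` and nonnegative measurable `g` integrable on
`(0,1]`, `∫₀¹ α x^(α-1) (∫_x^1 y^(-α) g(y) dy) dx = ∫₀¹ g(y) dy`. -/
theorem alphaL_unbiased
    (g : ℝ → ℝ) (α : ℝ) (hα : 0 < α)
    (hg_nonneg : ∀ x ∈ Set.Ioc (0 : ℝ) 1, 0 ≤ g x)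
    (hg_meas : Measurable g)
    (hg_int : IntegrableOn g (Set.Ioc (0 : ℝ) 1)) :
    ∫ x in Set.Ioc (0 : ℝ) 1, α * x ^ (α - 1) * (∫ y in x..1, y ^ (-α) * g y)
      = ∫ y in Set.Ioc (0 : ℝ) 1, g y := by
  set h : ℝ → ℝ := fun y => y ^ (-α) * g y with hh
  have h_meas : Measurable h := by measurability
  have h_nn : ∀ y ∈ Ioc (0:ℝ) 1, 0 ≤ h y := fun y hy =>
    mul_nonneg (Real.rpow_nonneg hy.1.le _) (hg_nonneg y hy)
  have h_int : ∀ x : ℝ, 0 < x → IntegrableOn h (Ioc x 1) := by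
    intro x hx
    have hsub : Ioc x 1 ⊆ Ioc 0 1 := Ioc_subset_Ioc_left hx.le
    refine Integrable.mono' (((hg_int.mono_set hsub).norm).const_mul (x ^ (-α)))
      h_meas.aestronglyMeasurable.restrict ?_
    filter_upwards [self_mem_ae_restrict measurableSet_Ioc] with y hy
    have hy0 : 0 < y := hx.trans hy.1
    have h1 : y ^ (-α) ≤ x ^ (-α) := by
      rw [Real.rpow_neg hy0.le, Real.rpow_neg hx.le]
      exact inv_anti₀ (Real.rpow_pos_of_pos hx α)
        (Real.rpow_le_rpow hx.le hy.1.le hα.le)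
    have h2 : 0 ≤ y ^ (-α) := Real.rpow_nonneg hy0.le _
    calc ‖h y‖ = y ^ (-α) * ‖g y‖ := by
          rw [hh]; simp [norm_mul, Real.norm_eq_abs, abs_of_nonneg h2]
      _ ≤ x ^ (-α) * ‖g y‖ := by gcongr
  set K : ℝ → ℝ → ℝ≥0∞ :=
    fun x y => (Ioi x).indicator (fun y => ENNReal.ofReal (h y)) y with hK
  have K_meas : Measurable (Function.uncurry K) := by
    have : Function.uncurry K =
        fun p : ℝ × ℝ => {q : ℝ × ℝ | q.1 < q.2}.indicator
          (fun q => ENNReal.ofReal (h q.2)) p := by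
      ext p
      simp only [Function.uncurry, hK, Set.indicator, Set.mem_Ioi, Set.mem_setOf_eq]
    rw [this]
    exact Measurable.indicator
      (ENNReal.measurable_ofReal.comp (h_meas.comp measurable_snd))
      (measurableSet_lt measurable_fst measurable_snd)
  -- rewriting the inner lintegral
  have key1 : ∀ x ∈ Ioc (0:ℝ) 1,
      ∫⁻ y in Ioc (0:ℝ) 1, K x y = ∫⁻ y in Ioc x 1, ENNReal.ofReal (h y) := by
    intro x hx
    rw [hK]
    rw [lintegral_indicator measurableSet_Ioi, Measure.restrict_restrict measurableSet_Ioi]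
    congr 1
    rw [Set.inter_comm, Ioc_inter_Ioi, sup_eq_right.mpr hx.1.le]
  have key2 : ∀ x ∈ Ioc (0:ℝ) 1,
      ∫⁻ y in Ioc x 1, ENNReal.ofReal (h y) = ENNReal.ofReal (∫ y in Ioc x 1, h y) := by
    intro x hx
    refine (ofReal_integral_eq_lintegral_ofReal (h_int x hx.1) ?_).symm
    filter_upwards [self_mem_ae_restrict measurableSet_Ioc] with y hy
    exact h_nn y ⟨hx.1.trans hy.1, hy.2⟩
  have hr : Measurable fun t : ℝ => t ^ (α - 1) := by measurability
  have meas_a : Measurable fun t : ℝ => α * t ^ (α - 1) := hr.const_mul α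
  set G : ℝ → ℝ :=
    fun x => α * x ^ (α - 1) * (∫⁻ y in Ioc (0:ℝ) 1, K x y).toReal with hG
  have G_meas : Measurable G := by
    apply Measurable.mul
    · exact meas_a
    · exact (Measurable.lintegral_prod_right'
        (ν := volume.restrict (Ioc (0:ℝ) 1)) K_meas).ennreal_toReal
  have step1 : ∫ x in Ioc (0:ℝ) 1, α * x ^ (α - 1) * (∫ y in x..1, h y)
      = ∫ x in Ioc (0:ℝ) 1, G x := by
    refine setIntegral_congr_fun measurableSet_Ioc (fun x hx => ?_)
    rw [hG]
    congr 1
    rw [intervalIntegral.integral_of_le hx.2, key1 x hx, key2 x hx, ENNReal.toReal_ofReal]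
    exact setIntegral_nonneg measurableSet_Ioc (fun y hy => h_nn y ⟨hx.1.trans hy.1, hy.2⟩)
  have step2 : ∫ x in Ioc (0:ℝ) 1, G x
      = (∫⁻ x in Ioc (0:ℝ) 1, ENNReal.ofReal (G x)).toReal := by
    refine integral_eq_lintegral_of_nonneg_ae ?_ G_meas.aestronglyMeasurable
    filter_upwards [self_mem_ae_restrict measurableSet_Ioc] with x hx
    exact mul_nonneg (mul_nonneg hα.le (Real.rpow_nonneg hx.1.le _)) ENNReal.toReal_nonneg
  have step3 : ∫⁻ x in Ioc (0:ℝ) 1, ENNReal.ofReal (G x)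
      = ∫⁻ x in Ioc (0:ℝ) 1, ∫⁻ y in Ioc (0:ℝ) 1,
          ENNReal.ofReal (α * x ^ (α - 1)) * K x y := by
    refine setLIntegral_congr_fun measurableSet_Ioc (fun x hx => ?_)
    rw [lintegral_const_mul' _ _ ENNReal.ofReal_ne_top, hG]
    have hfin : (∫⁻ y in Ioc (0:ℝ) 1, K x y) ≠ ⊤ := by
      rw [key1 x hx, key2 x hx]; exact ENNReal.ofReal_ne_top
    rw [ENNReal.ofReal_mul (mul_nonneg hα.le (Real.rpow_nonneg hx.1.le _)),
      ENNReal.ofReal_toReal hfin]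
  have step4 : ∫⁻ x in Ioc (0:ℝ) 1, ∫⁻ y in Ioc (0:ℝ) 1,
        ENNReal.ofReal (α * x ^ (α - 1)) * K x y
      = ∫⁻ y in Ioc (0:ℝ) 1, ∫⁻ x in Ioc (0:ℝ) 1,
        ENNReal.ofReal (α * x ^ (α - 1)) * K x y := by
    refine lintegral_lintegral_swap ?_
    refine Measurable.aemeasurable ?_
    have : (Function.uncurry fun x y => ENNReal.ofReal (α * x ^ (α - 1)) * K x y)
        = fun p : ℝ × ℝ => ENNReal.ofReal (α * p.1 ^ (α - 1)) * Function.uncurry K p := by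
      ext p; rfl
    rw [this]
    exact (ENNReal.measurable_ofReal.comp (meas_a.comp measurable_fst)).mul K_meas
  have step5 : ∀ y ∈ Ioc (0:ℝ) 1,
      ∫⁻ x in Ioc (0:ℝ) 1, ENNReal.ofReal (α * x ^ (α - 1)) * K x y
        = ENNReal.ofReal (g y) := by
    intro y hy
    have e1 : ∀ x : ℝ, ENNReal.ofReal (α * x ^ (α - 1)) * K x y
        = (Iio y).indicator (fun x => ENNReal.ofReal (α * x ^ (α - 1))
            * ENNReal.ofReal (h y)) x := by
      intro x
      rw [hK]
      by_cases hxy : x < y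
      · simp [Set.indicator, Set.mem_Ioi, Set.mem_Iio, hxy]
      · simp [Set.indicator, Set.mem_Ioi, Set.mem_Iio, hxy]
    calc ∫⁻ x in Ioc (0:ℝ) 1, ENNReal.ofReal (α * x ^ (α - 1)) * K x y
        = ∫⁻ x in Ioc (0:ℝ) 1, (Iio y).indicator
            (fun x => ENNReal.ofReal (α * x ^ (α - 1)) * ENNReal.ofReal (h y)) x :=
          lintegral_congr fun x => e1 x
      _ = ∫⁻ x in Iio y ∩ Ioc (0:ℝ) 1,
            ENNReal.ofReal (α * x ^ (α - 1)) * ENNReal.ofReal (h y) := by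
          rw [lintegral_indicator measurableSet_Iio,
            Measure.restrict_restrict measurableSet_Iio]
      _ = ∫⁻ x in Ioo (0:ℝ) y,
            ENNReal.ofReal (α * x ^ (α - 1)) * ENNReal.ofReal (h y) := by
          have hset : Iio y ∩ Ioc (0:ℝ) 1 = Ioo 0 y := by
            ext z
            simp only [Set.mem_inter_iff, Set.mem_Iio, Set.mem_Ioc, Set.mem_Ioo]
            constructor
            · rintro ⟨h1, h2, _⟩; exact ⟨h2, h1⟩
            · rintro ⟨h1, h2⟩; exact ⟨h2, h1, (h2.trans_le hy.2).le.trans le_rfl⟩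
          rw [hset]
      _ = ∫⁻ x in Ioc (0:ℝ) y,
            ENNReal.ofReal (α * x ^ (α - 1)) * ENNReal.ofReal (h y) :=
          setLIntegral_congr Ioo_ae_eq_Ioc
      _ = (∫⁻ x in Ioc (0:ℝ) y, ENNReal.ofReal (α * x ^ (α - 1)))
            * ENNReal.ofReal (h y) :=
          lintegral_mul_const' _ _ ENNReal.ofReal_ne_top
      _ = ENNReal.ofReal (g y) := by
          have hint : IntegrableOn (fun x : ℝ => α * x ^ (α - 1)) (Ioc (0:ℝ) y) := by
            have := intervalIntegral.intervalIntegrable_rpow' (a := 0) (b := y)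
              (r := α - 1) (by linarith)
            exact ((intervalIntegrable_iff_integrableOn_Ioc_of_le hy.1.le).mp this).const_mul α
          have hval : ∫ x in Ioc (0:ℝ) y, α * x ^ (α - 1) = y ^ α := by
            rw [← intervalIntegral.integral_of_le hy.1.le]
            rw [intervalIntegral.integral_const_mul, integral_rpow (Or.inl (by linarith))]
            have he : α - 1 + 1 = α := by ring
            rw [he, Real.zero_rpow hα.ne', sub_zero]
            field_simp
          have hA : ∫⁻ x in Ioc (0:ℝ) y, ENNReal.ofReal (α * x ^ (α - 1))
              = ENNReal.ofReal (y ^ α) := by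
            rw [← hval]
            refine (ofReal_integral_eq_lintegral_ofReal hint ?_).symm
            filter_upwards [self_mem_ae_restrict measurableSet_Ioc] with x hx
            exact mul_nonneg hα.le (Real.rpow_nonneg hx.1.le _)
          rw [hA, ← ENNReal.ofReal_mul (Real.rpow_nonneg hy.1.le _)]
          congr 1
          rw [hh]
          rw [← mul_assoc, ← Real.rpow_add hy.1]
          have : α + -α = 0 := by ring
          rw [this, Real.rpow_zero, one_mul]
  have step6 : (∫⁻ y in Ioc (0:ℝ) 1, ENNReal.ofReal (g y)).toReal
      = ∫ y in Ioc (0:ℝ) 1, g y := by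
    symm
    refine integral_eq_lintegral_of_nonneg_ae ?_ hg_meas.aestronglyMeasurable
    filter_upwards [self_mem_ae_restrict measurableSet_Ioc] with y hy using hg_nonneg y hy
  rw [step1, step2, step3, step4,
    setLIntegral_congr_fun measurableSet_Ioc step5, step6]
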